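/- Let S = ⟨qm₁,…,qm_d, pn₁,…,pn_k⟩ be a gluing of S₁ and S₂. Then: (1) for all x∈S₁ and y∈S₂, ord_S(qx+py) ≥ ord_{S₁}(x) + ord_{S₂}(y); (2) every u∈S can be written u = qz₁ + pz₂ with z₁∈S₁, z₂∈S₂ and ord_S(u) = ord_{S₁}(z₁) + ord_{S₂}(z₂). -/

import Mathlib

open scoped Pointwise

/-- `S ⊆ ℕ` is a numerical semigroup: it contains `0`, is closed under
addition, and has finite complement in `ℕ`. -/
def IsNumSgp (S : Set ℕ) : Prop :=
  (0 : ℕ) ∈ S ∧ (∀ a ∈ S, ∀ b ∈ S, a + b ∈ S) ∧ {x : ℕ | x ∉ S}.Finite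

/-- `nM S t` is the `t`-fold sumset of the maximal ideal `M = S \ {0}`,
with the convention `nM S 0 = S`. -/
def nM (S : Set ℕ) : ℕ → Set ℕ
  | 0 => S
  | t + 1 => (S \ {0}) + nM S t

/-- the order of `s` with respect to `S` : the largest `t` with `s ∈ tM`. -/
noncomputable def ordS (S : Set ℕ) (s : ℕ) : ℕ := sSup {t : ℕ | s ∈ nM S t}

/-- the multiplicity of `S` : its least nonzero element. -/
noncomputable def mult (S : Set ℕ) : ℕ := sInf {x : ℕ | x ∈ S ∧ x ≠ 0}

/-- the Apéry set of `S` with respect to `x` : elements `s ∈ S` with `s - x ∉ S`. -/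
def Ap (S : Set ℕ) (x : ℕ) : Set ℕ := {s : ℕ | s ∈ S ∧ ¬ ∃ t ∈ S, s = t + x}

/-- membership of an integer in (the image in `ℤ` of) `S`. -/
def zmem (S : Set ℕ) (z : ℤ) : Prop := ∃ t ∈ S, (t : ℤ) = z

/-- the Frobenius number of `S` : the largest integer not in `S`. -/
noncomputable def Frob (S : Set ℕ) : ℤ := sSup {z : ℤ | ¬ zmem S z}

/-- `S` is symmetric: for every integer `z`, `z ∈ S` iff `F(S) - z ∉ S`. -/
def IsSymmetric (S : Set ℕ) : Prop := ∀ z : ℤ, zmem S z ↔ ¬ zmem S (Frob S - z)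

/-- the set of maximal elements of `Ap S x` with respect to the order
`u ⪯ v` iff `v = u + z` for some `z ∈ S`. -/
def MaxAp (S : Set ℕ) (x : ℕ) : Set ℕ :=
  {w : ℕ | w ∈ Ap S x ∧ ∀ y ∈ Ap S x, (∃ z ∈ S, y = w + z) → y = w}

/-- the set of maximal elements of `Ap S x` with respect to the order
`u ⪯_M v` iff `v = u + z` for some `z ∈ S` with `ord(v) = ord(u) + ord(z)`. -/
def MaxMAp (S : Set ℕ) (x : ℕ) : Set ℕ :=
  {w : ℕ | w ∈ Ap S x ∧ ∀ y ∈ Ap S x,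
    (∃ z ∈ S, y = w + z ∧ ordS S y = ordS S w + ordS S z) → y = w}

/-- `S` is M-pure with respect to `x` : all maximal elements of `Ap S x`
under `⪯_M` have the same order. -/
def MPureWrt (S : Set ℕ) (x : ℕ) : Prop :=
  ∀ w ∈ MaxMAp S x, ∀ w' ∈ MaxMAp S x, ordS S w = ordS S w'

/-- `S` is M-pure : it is M-pure with respect to its multiplicity. -/
def MPure (S : Set ℕ) : Prop := MPureWrt S (mult S)

/-- `β_i(x)` : the number of elements of `Ap S x` of order `i`. -/
noncomputable def betaS (S : Set ℕ) (x i : ℕ) : ℕ := {w ∈ Ap S x | ordS S w = i}.ncard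

/-- `d(x)` : the maximal order of an element of `Ap S x`. -/
noncomputable def dS (S : Set ℕ) (x : ℕ) : ℕ := sSup (ordS S '' Ap S x)

/-- the reduction number of `S` : the least `r` with `(r+1)M = m(S) + rM`. -/
noncomputable def redNum (S : Set ℕ) : ℕ :=
  sInf {r : ℕ | nM S (r + 1) = (fun y => mult S + y) '' nM S r}

/-- `l_x(S) = max { ord(s+x) - ord(x) - ord(s) : s ∈ S, ord(s) ≤ r }`. -/
noncomputable def lS (S : Set ℕ) (x : ℕ) : ℕ :=
  sSup {t : ℕ | ∃ s ∈ S, ordS S s ≤ redNum S ∧ t = ordS S (s + x) - ordS S x - ordS S s}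

/-- the Hilbert function of `S`. -/
noncomputable def HilbS (S : Set ℕ) (t : ℕ) : ℕ := (nM S t \ nM S (t + 1)).ncard

/-- The data of a gluing `S = ⟨q m₁, …, q m_d, p n₁, …, p n_k⟩` of two numerical
semigroups `S₁ = ⟨m₁, …, m_d⟩` and `S₂ = ⟨n₁, …, n_k⟩`, minimally generated by
`m₁ < ⋯ < m_d` and `n₁ < ⋯ < n_k`, where `p ∈ S₁ \ {m₁, …, m_d}`,
`q ∈ S₂ \ {n₁, …, n_k}` and `gcd(p, q) = 1`. -/
structure Gluing where
  d : ℕ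
  k : ℕ
  hd : 0 < d
  hk : 0 < k
  m : Fin d → ℕ
  n : Fin k → ℕ
  p : ℕ
  q : ℕ
  hm : StrictMono m
  hn : StrictMono n
  hmin₁ : ∀ i, m i ∉ AddSubmonoid.closure (Set.range m \ {m i})
  hmin₂ : ∀ j, n j ∉ AddSubmonoid.closure (Set.range n \ {n j})
  hnum₁ : IsNumSgp (AddSubmonoid.closure (Set.range m) : Set ℕ)
  hnum₂ : IsNumSgp (AddSubmonoid.closure (Set.range n) : Set ℕ)
  hp : p ∈ AddSubmonoid.closure (Set.range m)
  hq : q ∈ AddSubmonoid.closure (Set.range n)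
  hpm : p ∉ Set.range m
  hqn : q ∉ Set.range n
  hpq : Nat.gcd p q = 1

/-- the numerical semigroup `S₁ = ⟨m₁, …, m_d⟩`. -/
def Gluing.S₁ (G : Gluing) : Set ℕ := (AddSubmonoid.closure (Set.range G.m) : Set ℕ)

/-- the numerical semigroup `S₂ = ⟨n₁, …, n_k⟩`. -/
def Gluing.S₂ (G : Gluing) : Set ℕ := (AddSubmonoid.closure (Set.range G.n) : Set ℕ)

/-- the glued numerical semigroup `S = ⟨q m₁, …, q m_d, p n₁, …, p n_k⟩`. -/
def Gluing.S (G : Gluing) : Set ℕ :=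
  (AddSubmonoid.closure
    ((fun x => G.q * x) '' Set.range G.m ∪ (fun x => G.p * x) '' Set.range G.n) : Set ℕ)

/-- the smallest generator `m₁` of `S₁`. -/
def Gluing.m₁ (G : Gluing) : ℕ := G.m ⟨0, G.hd⟩

/-- the smallest generator `n₁` of `S₂`. -/
def Gluing.n₁ (G : Gluing) : ℕ := G.n ⟨0, G.hk⟩

/-- the gluing is specific if `ord_{S₂}(q) + l_q(S₂) ≤ ord_{S₁}(p)`. -/
def Gluing.Specific (G : Gluing) : Prop := ordS G.S₂ G.q + lS G.S₂ G.q ≤ ordS G.S₁ G.p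

/-- the gluing is nice if `q = a n₁` for some `1 < a ≤ ord_{S₁}(p)`. -/
def Gluing.Nice (G : Gluing) : Prop := ∃ a : ℕ, 1 < a ∧ a ≤ ordS G.S₁ G.p ∧ G.q = a * G.n₁

section Aux

/-- Elements of `nM S t` are at least `t`. -/
lemma le_of_mem_nM {S : Set ℕ} : ∀ t {s : ℕ}, s ∈ nM S t → t ≤ s := by
  intro t
  induction t with
  | zero => intro s _; exact Nat.zero_le s
  | succ t ih =>
    intro s hs
    rw [nM, Set.mem_add] at hs
    obtain ⟨g, hg, v, hv, rfl⟩ := hs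
    have h1 : g ≠ 0 := fun h => hg.2 (by simp [h])
    have := ih hv
    omega

lemma bddAbove_ordSet (S : Set ℕ) (s : ℕ) : BddAbove {t | s ∈ nM S t} :=
  ⟨s, fun _ ht => le_of_mem_nM _ ht⟩

lemma mem_nM_ordS {S : Set ℕ} {s : ℕ} (hs : s ∈ S) : s ∈ nM S (ordS S s) := by
  have h := Nat.sSup_mem (s := {t | s ∈ nM S t})
    ⟨0, show s ∈ nM S 0 from hs⟩ (bddAbove_ordSet S s)
  exact h

lemma le_ordS {S : Set ℕ} {s t : ℕ} (h : s ∈ nM S t) : t ≤ ordS S s :=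
  le_csSup (bddAbove_ordSet S s) h

lemma nM_succ_mem {S : Set ℕ} {g v : ℕ} (hg : g ∈ S) (hg0 : g ≠ 0) {t : ℕ}
    (hv : v ∈ nM S t) : g + v ∈ nM S (t + 1) :=
  Set.add_mem_add ⟨hg, by simp [hg0]⟩ hv

lemma nM_subset {S : Set ℕ} (hadd : ∀ a ∈ S, ∀ b ∈ S, a + b ∈ S) :
    ∀ t, nM S t ⊆ S := by
  intro t
  induction t with
  | zero => exact subset_rfl
  | succ t ih =>
    intro s hs
    rw [nM, Set.mem_add] at hs
    obtain ⟨g, hg, v, hv, rfl⟩ := hs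
    exact hadd g hg.1 v (ih hv)

/-- `S + nM S t ⊆ nM S t`. -/
lemma add_mem_nM {S : Set ℕ} (hadd : ∀ a ∈ S, ∀ b ∈ S, a + b ∈ S)
    {w : ℕ} (hw : w ∈ S) : ∀ t {v : ℕ}, v ∈ nM S t → w + v ∈ nM S t := by
  intro t
  induction t with
  | zero => intro v hv; exact hadd w hw v hv
  | succ t ih =>
    intro v hv
    rw [nM, Set.mem_add] at hv
    obtain ⟨g, hg, v', hv', rfl⟩ := hv
    have : w + (g + v') = g + (w + v') := by omega
    rw [this]
    exact Set.add_mem_add hg (ih hv')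

lemma one_mem_closure_nat {A : Set ℕ} (h : (1 : ℕ) ∈ AddSubmonoid.closure A) :
    (1 : ℕ) ∈ A := by
  have := AddSubmonoid.closure_induction (s := A)
    (motive := fun x _ => x = 1 → x ∈ A)
    (fun x hx _ => hx)
    (by intro h01; exact absurd h01.symm one_ne_zero)
    (by
      intro x y hx hy px py hxy
      rcases Nat.add_eq_one_iff.mp hxy with ⟨hx0, hy1⟩ | ⟨hx1, hy0⟩
      · subst hx0; subst hy1; simpa using py rfl
      · subst hx1; subst hy0; simpa using px rfl)
    h
  exact this rfl

namespace Gluing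

variable (G : Gluing)

lemma m_ne_zero (i : Fin G.d) : G.m i ≠ 0 := by
  intro h
  exact G.hmin₁ i (h ▸ (AddSubmonoid.closure _).zero_mem)

lemma n_ne_zero (j : Fin G.k) : G.n j ≠ 0 := by
  intro h
  exact G.hmin₂ j (h ▸ (AddSubmonoid.closure _).zero_mem)

lemma p_ne_zero : G.p ≠ 0 := by
  intro h
  have hq1 : G.q = 1 := by have := G.hpq; rw [h] at this; simpa using this
  exact G.hqn (by rw [hq1]; exact one_mem_closure_nat (hq1 ▸ G.hq))

lemma q_ne_zero : G.q ≠ 0 := by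
  intro h
  have hp1 : G.p = 1 := by have := G.hpq; rw [h] at this; simpa using this
  exact G.hpm (by rw [hp1]; exact one_mem_closure_nat (hp1 ▸ G.hp))

lemma S₁_add : ∀ a ∈ G.S₁, ∀ b ∈ G.S₁, a + b ∈ G.S₁ := fun a ha b hb =>
  (AddSubmonoid.closure _).add_mem ha hb

lemma S₂_add : ∀ a ∈ G.S₂, ∀ b ∈ G.S₂, a + b ∈ G.S₂ := fun a ha b hb =>
  (AddSubmonoid.closure _).add_mem ha hb

lemma S_add : ∀ a ∈ G.S, ∀ b ∈ G.S, a + b ∈ G.S := fun a ha b hb =>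
  (AddSubmonoid.closure _).add_mem ha hb

lemma qmul_mem {x : ℕ} (hx : x ∈ G.S₁) : G.q * x ∈ G.S := by
  induction hx using AddSubmonoid.closure_induction with
  | mem y hy =>
    exact AddSubmonoid.subset_closure (Or.inl ⟨y, hy, rfl⟩)
  | zero => simpa using (show (0 : ℕ) ∈ G.S from (AddSubmonoid.closure _).zero_mem)
  | add x y _ _ px py =>
    rw [Nat.mul_add]
    exact G.S_add _ px _ py

lemma pmul_mem {y : ℕ} (hy : y ∈ G.S₂) : G.p * y ∈ G.S := by
  induction hy using AddSubmonoid.closure_induction with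
  | mem y hy =>
    exact AddSubmonoid.subset_closure (Or.inr ⟨y, hy, rfl⟩)
  | zero => simpa using (show (0 : ℕ) ∈ G.S from (AddSubmonoid.closure _).zero_mem)
  | add x y _ _ px py =>
    rw [Nat.mul_add]
    exact G.S_add _ px _ py

/-- Every element of `S` decomposes as `q z₁ + p z₂`. -/
lemma S_decomp {u : ℕ} (hu : u ∈ G.S) :
    ∃ z₁ ∈ G.S₁, ∃ z₂ ∈ G.S₂, u = G.q * z₁ + G.p * z₂ := by
  induction hu using AddSubmonoid.closure_induction with
  | mem y hy =>
    rcases hy with ⟨x, hx, rfl⟩ | ⟨x, hx, rfl⟩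
    · exact ⟨x, AddSubmonoid.subset_closure hx, 0,
        (AddSubmonoid.closure _).zero_mem, by simp⟩
    · exact ⟨0, (AddSubmonoid.closure _).zero_mem, x,
        AddSubmonoid.subset_closure hx, by simp⟩
  | zero =>
    exact ⟨0, (AddSubmonoid.closure _).zero_mem, 0,
      (AddSubmonoid.closure _).zero_mem, by simp⟩
  | add x y _ _ px py =>
    obtain ⟨a, ha, b, hb, rfl⟩ := px
    obtain ⟨c, hc, e, he, rfl⟩ := py
    exact ⟨a + c, G.S₁_add _ ha _ hc, b + e, G.S₂_add _ hb _ he, by ring⟩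

/-- Key additivity: `x ∈ nM S₁ a` and `y ∈ nM S₂ b` imply `qx + py ∈ nM S (a+b)`. -/
lemma key_add : ∀ a b {x y : ℕ}, x ∈ nM G.S₁ a → y ∈ nM G.S₂ b →
    G.q * x + G.p * y ∈ nM G.S (a + b) := by
  have base : ∀ b {x y : ℕ}, x ∈ G.S₁ → y ∈ nM G.S₂ b →
      G.q * x + G.p * y ∈ nM G.S b := by
    intro b
    induction b with
    | zero => intro x y hx hy; exact G.S_add _ (G.qmul_mem hx) _ (G.pmul_mem hy)
    | succ b ih =>
      intro x y hx hy
      rw [nM, Set.mem_add] at hy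
      obtain ⟨g, hg, v, hv, rfl⟩ := hy
      have hg0 : g ≠ 0 := fun h => hg.2 (by simp [h])
      have h1 : G.q * x + G.p * (g + v) = G.p * g + (G.q * x + G.p * v) := by ring
      rw [h1]
      exact nM_succ_mem (G.pmul_mem hg.1) (by
        have := G.p_ne_zero
        exact Nat.mul_ne_zero this hg0) (ih hx hv)
  intro a
  induction a with
  | zero =>
    intro b x y hx hy
    simpa using base b hx hy
  | succ a ih =>
    intro b x y hx hy
    rw [nM, Set.mem_add] at hx
    obtain ⟨g, hg, v, hv, rfl⟩ := hx
    have hg0 : g ≠ 0 := fun h => hg.2 (by simp [h])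
    have h1 : G.q * (g + v) + G.p * y = G.q * g + (G.q * v + G.p * y) := by ring
    have h2 : a + 1 + b = (a + b) + 1 := by omega
    rw [h1, h2]
    exact nM_succ_mem (G.qmul_mem hg.1)
      (Nat.mul_ne_zero G.q_ne_zero hg0) (ih b hv hy)

/-- Key decomposition: elements of `nM S t` decompose compatibly. -/
lemma key_decomp : ∀ t {u : ℕ}, u ∈ nM G.S t →
    ∃ a b z₁ z₂, z₁ ∈ nM G.S₁ a ∧ z₂ ∈ nM G.S₂ b ∧
      u = G.q * z₁ + G.p * z₂ ∧ t ≤ a + b := by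
  intro t
  induction t with
  | zero =>
    intro u hu
    obtain ⟨z₁, hz₁, z₂, hz₂, h⟩ := G.S_decomp hu
    exact ⟨0, 0, z₁, z₂, hz₁, hz₂, h, le_rfl⟩
  | succ t ih =>
    intro u hu
    rw [nM, Set.mem_add] at hu
    obtain ⟨g, hg, v, hv, rfl⟩ := hu
    have hg0 : g ≠ 0 := fun h => hg.2 (by simp [h])
    obtain ⟨a, b, z₁, z₂, hz₁, hz₂, rfl, hab⟩ := ih hv
    obtain ⟨w₁, hw₁, w₂, hw₂, rfl⟩ := G.S_decomp hg.1
    by_cases hw10 : w₁ = 0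
    · subst hw10
      have hw20 : w₂ ≠ 0 := by
        intro h
        exact hg0 (by simp [h])
      refine ⟨a, b + 1, z₁, w₂ + z₂, hz₁, nM_succ_mem hw₂ hw20 hz₂, by ring, by omega⟩
    · refine ⟨a + 1, b, w₁ + z₁, w₂ + z₂, nM_succ_mem hw₁ hw10 hz₁,
        add_mem_nM G.S₂_add hw₂ b hz₂, by ring, by omega⟩

end Gluing

end Aux

/-- for a gluing `S` of `S₁` and `S₂`:
(1) `ord_S(qx + py) ≥ ord_{S₁}(x) + ord_{S₂}(y)` for all `x ∈ S₁`, `y ∈ S₂`;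
(2) every `u ∈ S` can be written `u = qz₁ + pz₂` with `z₁ ∈ S₁`, `z₂ ∈ S₂` and
`ord_S(u) = ord_{S₁}(z₁) + ord_{S₂}(z₂)`. -/
theorem stmt6 (G : Gluing) :
    (∀ x ∈ G.S₁, ∀ y ∈ G.S₂,
      ordS G.S₁ x + ordS G.S₂ y ≤ ordS G.S (G.q * x + G.p * y)) ∧
    (∀ u ∈ G.S, ∃ z₁ ∈ G.S₁, ∃ z₂ ∈ G.S₂,
      u = G.q * z₁ + G.p * z₂ ∧ ordS G.S u = ordS G.S₁ z₁ + ordS G.S₂ z₂) := by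
  have part1 : ∀ x ∈ G.S₁, ∀ y ∈ G.S₂,
      ordS G.S₁ x + ordS G.S₂ y ≤ ordS G.S (G.q * x + G.p * y) := by
    intro x hx y hy
    exact le_ordS (G.key_add _ _ (mem_nM_ordS hx) (mem_nM_ordS hy))
  refine ⟨part1, ?_⟩
  intro u hu
  obtain ⟨a, b, z₁, z₂, hz₁, hz₂, heq, hab⟩ := G.key_decomp _ (mem_nM_ordS hu)
  have hz₁S : z₁ ∈ G.S₁ := nM_subset G.S₁_add a hz₁
  have hz₂S : z₂ ∈ G.S₂ := nM_subset G.S₂_add b hz₂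
  refine ⟨z₁, hz₁S, z₂, hz₂S, heq, le_antisymm ?_ ?_⟩
  · calc ordS G.S u ≤ a + b := hab
      _ ≤ ordS G.S₁ z₁ + ordS G.S₂ z₂ :=
          Nat.add_le_add (le_ordS hz₁) (le_ordS hz₂)
  · calc ordS G.S₁ z₁ + ordS G.S₂ z₂ ≤ ordS G.S (G.q * z₁ + G.p * z₂) :=
          part1 z₁ hz₁S z₂ hz₂S
      _ = ordS G.S u := by rw [← heq]
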